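/- In a cone with joins, the modularity identity x + y = (x ∨ y) + (x ∧ y) holds for all x, y; more generally, x + y = z + w implies x + y = (x ∨ z) + (y ∧ w). -/

import Mathlib

open scoped NNReal

section Stmt9Aux

variable {J : Type*} [CompleteLattice J] [AddCommMonoid J] [Module ℝ≥0 J]

private theorem stmt9_add_le_add_left (hle : ∀ x y : J, x ≤ y ↔ ∃ z, x + z = y)
    {a b : J} (h : a ≤ b) (c : J) : c + a ≤ c + b := by
  obtain ⟨z, hz⟩ := (hle a b).1 h
  exact (hle _ _).2 ⟨z, by rw [add_assoc, hz]⟩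

private theorem stmt9_add_le_add_right (hle : ∀ x y : J, x ≤ y ↔ ∃ z, x + z = y)
    {a b : J} (h : a ≤ b) (c : J) : a + c ≤ b + c := by
  rw [add_comm a c, add_comm b c]; exact stmt9_add_le_add_left hle h c

private theorem stmt9_le_add_right (hle : ∀ x y : J, x ≤ y ↔ ∃ z, x + z = y)
    (a b : J) : a ≤ a + b := (hle _ _).2 ⟨b, rfl⟩

private theorem stmt9_le_add_left (hle : ∀ x y : J, x ≤ y ↔ ∃ z, x + z = y)
    (a b : J) : a ≤ b + a := (hle _ _).2 ⟨b, add_comm a b⟩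

private theorem stmt9_smul_le_smul (hle : ∀ x y : J, x ≤ y ↔ ∃ z, x + z = y)
    {a b : J} (h : a ≤ b) (η : ℝ≥0) : η • a ≤ η • b := by
  obtain ⟨z, hz⟩ := (hle a b).1 h
  exact (hle _ _).2 ⟨η • z, by rw [← smul_add, hz]⟩

private theorem stmt9_smul_le_smul_scalar (hle : ∀ x y : J, x ≤ y ↔ ∃ z, x + z = y)
    {l m : ℝ≥0} (h : l ≤ m) (c : J) : l • c ≤ m • c :=
  (hle _ _).2 ⟨(m - l) • c, by rw [← add_smul, add_tsub_cancel_of_le h]⟩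

private theorem stmt9_add_inf (hinf : ∀ (v : J) (A : Set J),
    sInf ((fun a => v + a) '' A) = v + sInf A) (c a b : J) :
    c + (a ⊓ b) = (c + a) ⊓ (c + b) := by
  have h := hinf c {a, b}
  rw [Set.image_pair, sInf_pair, sInf_pair] at h
  exact h.symm

private theorem stmt9_le_of_smul_lt_one
    (hscale : ∀ v : J, IsLUB {w | ∃ η : ℝ≥0, η < 1 ∧ w = η • v} v)
    {a c : J} (h : ∀ η : ℝ≥0, η < 1 → η • a ≤ c) : a ≤ c := by
  refine (hscale a).2 ?_
  rintro w ⟨η, hη, rfl⟩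
  exact h η hη

/-- arithmetic helper: for `η < 1` there is `n` with `η * (1 + (n+1)⁻¹) ≤ 1`. -/
private theorem stmt9_arith {η : ℝ≥0} (hη : η < 1) :
    ∃ n : ℕ, η * (1 + (((n : ℝ≥0) + 1))⁻¹) ≤ 1 := by
  obtain ⟨n, hn⟩ := exists_nat_ge (η / (1 - η))
  refine ⟨n, ?_⟩
  set c : ℝ≥0 := (n : ℝ≥0) + 1 with hc
  have hc0 : c ≠ 0 := by positivity
  have h1η : (1 : ℝ≥0) - η ≠ 0 := (tsub_pos_of_lt hη).ne'
  have hnc : η / (1 - η) ≤ c := le_trans hn (by simp [hc])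
  have hηc : η ≤ c * (1 - η) := by
    calc η = (η / (1 - η)) * (1 - η) := by rw [div_mul_cancel₀ _ h1η]
    _ ≤ c * (1 - η) := mul_le_mul_of_nonneg_right hnc zero_le
  have key : η * c⁻¹ ≤ 1 - η := by
    calc η * c⁻¹ ≤ (c * (1 - η)) * c⁻¹ := mul_le_mul_of_nonneg_right hηc zero_le
    _ = (1 - η) * (c * c⁻¹) := by ring
    _ = 1 - η := by rw [mul_inv_cancel₀ hc0, mul_one]
  calc η * (1 + c⁻¹) = η + η * c⁻¹ := by ring
  _ ≤ η + (1 - η) := add_le_add le_rfl key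
  _ = 1 := by rw [add_tsub_cancel_of_le hη.le]

/-- Key lemma: if `e + u = f + u` then `(e ⊔ f) + u ≤ e + u`. -/
private theorem stmt9_key (hle : ∀ x y : J, x ≤ y ↔ ∃ z, x + z = y)
    (hscale : ∀ v : J, IsLUB {w | ∃ η : ℝ≥0, η < 1 ∧ w = η • v} v)
    {e f u : J} (hef : e + u = f + u) : (e ⊔ f) + u ≤ e + u := by
  -- step 1: (n : ℝ≥0) • e + u = (n : ℝ≥0) • f + u
  have hn : ∀ n : ℕ, (n : ℝ≥0) • e + u = (n : ℝ≥0) • f + u := by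
    intro n
    induction n with
    | zero => simp
    | succ k ih =>
      have hcast : ((k + 1 : ℕ) : ℝ≥0) = (k : ℝ≥0) + 1 := by push_cast; ring
      rw [hcast, add_smul, add_smul, one_smul, one_smul]
      calc (k : ℝ≥0) • e + e + u = (k : ℝ≥0) • e + (e + u) := by rw [add_assoc]
      _ = (k : ℝ≥0) • e + (f + u) := by rw [hef]
      _ = ((k : ℝ≥0) • e + u) + f := by abel
      _ = ((k : ℝ≥0) • f + u) + f := by rw [ih]
      _ = (k : ℝ≥0) • f + f + u := by abel
  -- step 2: divide by n+1
  have hdiv : ∀ n : ℕ, e + ((n : ℝ≥0) + 1)⁻¹ • u = f + ((n : ℝ≥0) + 1)⁻¹ • u := by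
    intro n
    have hc0 : ((n : ℝ≥0) + 1) ≠ 0 := by positivity
    have h := congrArg (fun v : J => ((n : ℝ≥0) + 1)⁻¹ • v) (hn (n + 1))
    simp only [smul_add, smul_smul] at h
    rw [Nat.cast_add, Nat.cast_one] at h
    rwa [inv_mul_cancel₀ hc0, one_smul, one_smul] at h
  -- step 3: (e ⊔ f) + u ≤ (1 + (n+1)⁻¹) • (e + u)
  have hbound : ∀ n : ℕ, (e ⊔ f) + u ≤ (1 + ((n : ℝ≥0) + 1)⁻¹) • (e + u) := by
    intro n
    set c : ℝ≥0 := ((n : ℝ≥0) + 1)⁻¹ with hcdef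
    have hsup : e ⊔ f ≤ e + c • u := by
      refine sup_le (stmt9_le_add_right hle e _) ?_
      rw [hdiv n]
      exact stmt9_le_add_right hle f _
    have h1 : (e ⊔ f) + u ≤ (e + c • u) + u := stmt9_add_le_add_right hle hsup u
    have h2 : (e + c • u) + u = (e + u) + c • u := by
      rw [add_assoc, add_assoc, add_comm (c • u) u]
    have hu : u ≤ e + u := stmt9_le_add_left hle u e
    have h3 : (e + u) + c • u ≤ (e + u) + c • (e + u) :=
      stmt9_add_le_add_left hle (stmt9_smul_le_smul hle hu c) _
    have h4 : (e + u) + c • (e + u) = (1 + c) • (e + u) := by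
      rw [add_smul, one_smul]
    calc (e ⊔ f) + u ≤ (e + c • u) + u := h1
    _ = (e + u) + c • u := h2
    _ ≤ (e + u) + c • (e + u) := h3
    _ = (1 + c) • (e + u) := h4
  -- step 4: conclude via hscale
  refine stmt9_le_of_smul_lt_one hscale ?_
  intro η hη
  obtain ⟨n, hn1⟩ := stmt9_arith hη
  calc η • ((e ⊔ f) + u) ≤ η • ((1 + ((n : ℝ≥0) + 1)⁻¹) • (e + u)) :=
        stmt9_smul_le_smul hle (hbound n) η
  _ = (η * (1 + ((n : ℝ≥0) + 1)⁻¹)) • (e + u) := by rw [smul_smul]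
  _ ≤ (1 : ℝ≥0) • (e + u) := stmt9_smul_le_smul_scalar hle hn1 _
  _ = e + u := one_smul _ _

end Stmt9Aux

/-- Modularity in a cone with joins: `x + y = (x ⊔ y) + (x ⊓ y)`, and more generally
`x + y = z + w` implies `x + y = (x ⊔ z) + (y ⊓ w)`. -/
theorem stmt9 {J : Type*} [CompleteLattice J] [AddCommMonoid J] [Module ℝ≥0 J]
    (hle : ∀ x y : J, x ≤ y ↔ ∃ z, x + z = y)
    (hscale : ∀ v : J, IsLUB {w | ∃ η : ℝ≥0, η < 1 ∧ w = η • v} v)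
    (hinf : ∀ (v : J) (A : Set J), sInf ((fun a => v + a) '' A) = v + sInf A) :
    (∀ x y z w : J, x + y = z + w → x + y = (x ⊔ z) + (y ⊓ w)) ∧
      ∀ x y : J, x + y = (x ⊔ y) + (x ⊓ y) := by
  have main : ∀ x y z w : J, x + y = z + w → x + y = (x ⊔ z) + (y ⊓ w) := by
    intro x y z w hxyzw
    have hmx : x + (y ⊓ w) ≤ x + y := by
      rw [stmt9_add_inf hinf]; exact inf_le_left
    have hmz : z + (y ⊓ w) ≤ x + y := by
      rw [stmt9_add_inf hinf, hxyzw]; exact inf_le_right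
    obtain ⟨p, hp⟩ := (hle _ _).1 hmx
    obtain ⟨q, hq⟩ := (hle _ _).1 hmz
    have he : (x + p) + (y ⊓ w) = x + y := by
      rw [← hp, add_assoc, add_assoc, add_comm p (y ⊓ w)]
    have hf : (z + q) + (y ⊓ w) = x + y := by
      rw [← hq, add_assoc, add_assoc, add_comm q (y ⊓ w)]
    have hK : ((x + p) ⊔ (z + q)) + (y ⊓ w) ≤ x + y := by
      have := stmt9_key hle hscale (e := x + p) (f := z + q) (u := y ⊓ w)
        (he.trans hf.symm)
      rw [he] at this
      exact this
    have hsub : x ⊔ z ≤ (x + p) ⊔ (z + q) :=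
      sup_le_sup (stmt9_le_add_right hle x p) (stmt9_le_add_right hle z q)
    have h1 : (x ⊔ z) + (y ⊓ w) ≤ x + y :=
      le_trans (stmt9_add_le_add_right hle hsub _) hK
    have h2 : x + y ≤ (x ⊔ z) + (y ⊓ w) := by
      rw [stmt9_add_inf hinf]
      refine le_inf ?_ ?_
      · exact stmt9_add_le_add_right hle le_sup_left y
      · rw [hxyzw]; exact stmt9_add_le_add_right hle le_sup_right w
    exact le_antisymm h2 h1
  refine ⟨main, fun x y => ?_⟩
  have := main x y y x (add_comm x y)
  rwa [inf_comm y x] at this
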